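/- Let I ⊂ k[x_0,...,x_r] be a graded ideal and < a monomial order. Then k[x_0,...,x_r]/I and k[x_0,...,x_r]/in_<(I) have the same Hilbert function. -/

import Mathlib

open MvPolynomial

/-- `μ` is the leading monomial of `f` with respect to `ord`. -/
def IsLeadMonomial {σ : Type*} {k : Type*} [CommSemiring k]
    (ord : (σ →₀ ℕ) → (σ →₀ ℕ) → Prop) (f : MvPolynomial σ k) (μ : σ →₀ ℕ) : Prop :=
  μ ∈ f.support ∧ ∀ μ' ∈ f.support, μ' ≠ μ → ord μ' μ

/-- The initial ideal of `I` with respect to `ord`. -/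
noncomputable def InitialIdeal {σ : Type*} {k : Type*} [CommSemiring k]
    (ord : (σ →₀ ℕ) → (σ →₀ ℕ) → Prop) (I : Ideal (MvPolynomial σ k)) :
    Ideal (MvPolynomial σ k) :=
  Ideal.span {q | ∃ f ∈ I, f ≠ 0 ∧ ∃ μ, IsLeadMonomial ord f μ ∧ q = monomial μ (1 : k)}

/-- The degree-`i` piece of `k[x]/I`, as a quotient of the space of homogeneous
polynomials of degree `i`. -/
noncomputable def gradedPieceDim (k : Type*) [Field k] {m : ℕ}
    (I : Ideal (MvPolynomial (Fin m) k)) (i : ℕ) : ℕ :=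
  Module.finrank k
    ((homogeneousSubmodule (Fin m) k i) ⧸
      (Submodule.comap (homogeneousSubmodule (Fin m) k i).subtype
        (Submodule.restrictScalars k I)))

section AuxLemmas

variable {σ : Type*} {k : Type*} [Field k]
variable {ord : (σ →₀ ℕ) → (σ →₀ ℕ) → Prop}

lemma exists_maxMono (htrans : Transitive ord)
    (htotal : ∀ a b, a = b ∨ ord a b ∨ ord b a)
    {s : Finset (σ →₀ ℕ)} (hs : s.Nonempty) :
    ∃ μ ∈ s, ∀ ν ∈ s, ν ≠ μ → ord ν μ := by
  classical
  induction s using Finset.induction_on with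
  | empty => exact absurd hs (by simp)
  | @insert a s ha ih =>
    rcases s.eq_empty_or_nonempty with rfl | hsne
    · exact ⟨a, by simp, by simp⟩
    · obtain ⟨μ, hμs, hmax⟩ := ih hsne
      rcases htotal a μ with h | h | h
      · subst h
        refine ⟨a, Finset.mem_insert_self a s, fun ν hν hne => ?_⟩
        rcases Finset.mem_insert.1 hν with rfl | hν'
        · exact absurd rfl hne
        · exact hmax ν hν' hne
      · refine ⟨μ, Finset.mem_insert_of_mem hμs, fun ν hν hne => ?_⟩
        rcases Finset.mem_insert.1 hν with rfl | hν'
        · exact h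
        · exact hmax ν hν' hne
      · refine ⟨a, Finset.mem_insert_self a s, fun ν hν hne => ?_⟩
        rcases Finset.mem_insert.1 hν with rfl | hν'
        · exact absurd rfl hne
        · by_cases hνμ : ν = μ
          · exact hνμ ▸ h
          · exact htrans (hmax ν hν' hνμ) h

lemma support_subset_of_mem_monomialSpan {S : Set (σ →₀ ℕ)} {g : MvPolynomial σ k}
    (hg : g ∈ Ideal.span ((fun μ => monomial μ (1 : k)) '' S)) :
    ∀ ν ∈ g.support, ∃ α ∈ S, ∃ β, ν = α + β := by
  classical
  refine Submodule.span_induction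
    (p := fun x _ => ∀ ν ∈ x.support, ∃ α ∈ S, ∃ β, ν = α + β) ?_ ?_ ?_ ?_ hg
  · rintro x ⟨α, hα, rfl⟩ ν hν
    rw [support_monomial] at hν
    rw [if_neg (one_ne_zero (α := k))] at hν
    exact ⟨α, hα, 0, by rw [Finset.mem_singleton.1 hν, add_zero]⟩
  · intro ν hν; simp at hν
  · intro x y hx hy px py ν hν
    rcases Finset.mem_union.1 (support_add hν) with h | h
    exacts [px ν h, py ν h]
  · intro a x hx px ν hν
    have hν' : ν ∈ (a * x).support := by rwa [smul_eq_mul] at hν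
    obtain ⟨p, hp, q, hq, hpq⟩ := Finset.mem_add.1 (support_mul a x hν')
    obtain ⟨α, hα, β, rfl⟩ := px q hq
    exact ⟨α, hα, β + p, by rw [← hpq]; abel⟩

lemma finrank_eq_ncard_lead (htrans : Transitive ord) (hirr : ∀ a, ¬ ord a a)
    (htotal : ∀ a b, a = b ∨ ord a b ∨ ord b a)
    (W : Submodule k (MvPolynomial σ k)) (T : Finset (σ →₀ ℕ))
    (hWT : ∀ f ∈ W, (f : MvPolynomial σ k).support ⊆ T) :
    Module.finrank k W = {μ | ∃ f ∈ W, f ≠ 0 ∧ IsLeadMonomial ord f μ}.ncard := by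
  classical
  set LM : Set (σ →₀ ℕ) := {μ | ∃ f ∈ W, f ≠ 0 ∧ IsLeadMonomial ord f μ} with hLMdef
  have hLMT : LM ⊆ ↑T := by
    rintro μ ⟨f, hfW, hf0, hμ⟩
    exact hWT f hfW hμ.1
  have hfin : LM.Finite := Set.Finite.subset T.finite_toSet hLMT
  haveI : Fintype LM := hfin.fintype
  have hch : ∀ μ : LM, ∃ f : MvPolynomial σ k,
      f ∈ W ∧ f ≠ 0 ∧ IsLeadMonomial ord f ↑μ := fun μ => μ.2
  choose v hvW hv0 hvlead using hch
  have hlin : LinearIndependent k v := by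
    rw [linearIndependent_iff']
    intro s g hsum i hi
    by_contra hgi
    set s' := s.filter (fun j => g j ≠ 0) with hs'
    have his' : i ∈ s' := Finset.mem_filter.2 ⟨hi, hgi⟩
    have htne : (s'.image (fun j : LM => (j : σ →₀ ℕ))).Nonempty :=
      ⟨i, Finset.mem_image_of_mem _ his'⟩
    obtain ⟨μ, hμt, hmax⟩ := exists_maxMono htrans htotal htne
    obtain ⟨j, hjs', hjμ⟩ := Finset.mem_image.1 hμt
    have hcoeff : coeff μ (∑ b ∈ s, g b • v b) = 0 := by rw [hsum]; simp
    rw [coeff_sum] at hcoeff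
    simp_rw [coeff_smul, smul_eq_mul] at hcoeff
    have hone : ∑ b ∈ s, g b * coeff μ (v b) = g j * coeff μ (v j) := by
      apply Finset.sum_eq_single
      · intro b hb hbj
        by_cases hgb : g b = 0
        · rw [hgb, zero_mul]
        · by_cases hc : coeff μ (v b) = 0
          · rw [hc, mul_zero]
          · exfalso
            have hb' : b ∈ s' := Finset.mem_filter.2 ⟨hb, hgb⟩
            have hμsupp : μ ∈ (v b).support := mem_support_iff.2 hc
            have hbmem : (b : σ →₀ ℕ) ∈ s'.image (fun j : LM => (j : σ →₀ ℕ)) :=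
              Finset.mem_image_of_mem _ hb'
            have hbne : (b : σ →₀ ℕ) ≠ μ := fun h => hbj (Subtype.ext (h.trans hjμ.symm))
            have h1 : ord μ (b : σ →₀ ℕ) :=
              (hvlead b).2 μ hμsupp (fun h => hbne h.symm)
            exact hirr μ (htrans h1 (hmax _ hbmem hbne))
      · intro h; exact absurd (Finset.mem_filter.1 hjs').1 h
    have hjc : coeff μ (v j) ≠ 0 := by
      have h2 := (hvlead j).1
      rw [hjμ] at h2
      exact mem_support_iff.1 h2
    have hgj : g j ≠ 0 := (Finset.mem_filter.1 hjs').2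
    rw [hone] at hcoeff
    exact mul_ne_zero hgj hjc hcoeff
  have hsub : ∀ n : ℕ, ∀ f ∈ W, f ≠ 0 → ∀ μ, IsLeadMonomial ord f μ →
      (T.filter (fun ν => ν = μ ∨ ord ν μ)).card ≤ n →
      f ∈ Submodule.span k (Set.range v) := by
    intro n
    induction n with
    | zero =>
      intro f hfW hf0 μ hμ hcard
      exfalso
      have hμT : μ ∈ T := hWT f hfW hμ.1
      have hmem : μ ∈ T.filter (fun ν => ν = μ ∨ ord ν μ) :=
        Finset.mem_filter.2 ⟨hμT, Or.inl rfl⟩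
      have := Finset.card_pos.2 ⟨μ, hmem⟩
      omega
    | succ n ih =>
      intro f hfW hf0 μ hμ hcard
      have hμLM : μ ∈ LM := ⟨f, hfW, hf0, hμ⟩
      set i : LM := ⟨μ, hμLM⟩ with hidef
      have hvi : IsLeadMonomial ord (v i) μ := hvlead i
      have hd : coeff μ (v i) ≠ 0 := mem_support_iff.1 hvi.1
      set c := coeff μ f / coeff μ (v i) with hcdef
      set gp := f - c • v i with hgpdef
      have hgpW : gp ∈ W := W.sub_mem hfW (W.smul_mem _ (hvW i))
      have hfeq : f = gp + c • v i := by rw [hgpdef]; abel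
      have hvis : v i ∈ Submodule.span k (Set.range v) := Submodule.subset_span ⟨i, rfl⟩
      by_cases hgp0 : gp = 0
      · rw [hfeq, hgp0, zero_add]
        exact Submodule.smul_mem _ _ hvis
      · have hsupp : ∀ ν ∈ gp.support, ν ≠ μ → ord ν μ := by
          intro ν hν hne
          have hν' := MvPolynomial.support_sub σ f (c • v i) hν
          rcases Finset.mem_union.1 hν' with h | h
          · exact hμ.2 ν h hne
          · exact hvi.2 ν (MvPolynomial.support_smul h) hne
        have hμnot : μ ∉ gp.support := by
          rw [notMem_support_iff, hgpdef, coeff_sub, coeff_smul, smul_eq_mul, hcdef,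
            div_mul_cancel₀ _ hd, sub_self]
        obtain ⟨μ₂, hμ₂supp, hmax₂⟩ := exists_maxMono htrans htotal
          (Finset.nonempty_iff_ne_empty.2 (fun h => hgp0 (support_eq_empty.1 h)))
        have hlead₂ : IsLeadMonomial ord gp μ₂ := ⟨hμ₂supp, hmax₂⟩
        have hμ₂ne : μ₂ ≠ μ := fun h => hμnot (h ▸ hμ₂supp)
        have hord₂ : ord μ₂ μ := hsupp μ₂ hμ₂supp hμ₂ne
        have hss : T.filter (fun ν => ν = μ₂ ∨ ord ν μ₂) ⊂
            T.filter (fun ν => ν = μ ∨ ord ν μ) := by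
          rw [Finset.ssubset_def]
          constructor
          · intro ν hν
            obtain ⟨hνT, hν'⟩ := Finset.mem_filter.1 hν
            refine Finset.mem_filter.2 ⟨hνT, Or.inr ?_⟩
            rcases hν' with rfl | hν'
            · exact hord₂
            · exact htrans hν' hord₂
          · intro hcon
            have hμT : μ ∈ T := hWT f hfW hμ.1
            have := hcon (Finset.mem_filter.2 ⟨hμT, Or.inl rfl⟩)
            obtain ⟨-, h⟩ := Finset.mem_filter.1 this
            rcases h with h | h
            · exact hμ₂ne h.symm
            · exact hirr μ (htrans h hord₂)
        have hcard₂ : (T.filter (fun ν => ν = μ₂ ∨ ord ν μ₂)).card ≤ n := by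
          have := Finset.card_lt_card hss
          omega
        have hgps := ih gp hgpW hgp0 μ₂ hlead₂ hcard₂
        rw [hfeq]
        exact Submodule.add_mem _ hgps (Submodule.smul_mem _ _ hvis)
  have hspan : Submodule.span k (Set.range v) = W := by
    apply le_antisymm
    · rw [Submodule.span_le]
      rintro _ ⟨i, rfl⟩
      exact hvW i
    · intro f hfW
      by_cases hf0 : f = 0
      · rw [hf0]; exact Submodule.zero_mem _
      · obtain ⟨μ, hμ, hmax⟩ := exists_maxMono htrans htotal
          (Finset.nonempty_iff_ne_empty.2 (fun h => hf0 (support_eq_empty.1 h)))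
        exact hsub _ f hfW hf0 μ ⟨hμ, hmax⟩ le_rfl
  rw [← hspan, finrank_span_eq_card hlin, Set.ncard_eq_toFinset_card']
  exact (Set.toFinset_card LM).symm

end AuxLemmas

/-- If `I` is a graded ideal of `k[x₀,…,x_r]` and `ord` a monomial order, then
`k[x]/I` and `k[x]/in(I)` have the same Hilbert function. -/
theorem hilbertFunction_initialIdeal
    (k : Type*) [Field k] (r : ℕ)
    (ord : (Fin (r + 1) →₀ ℕ) → (Fin (r + 1) →₀ ℕ) → Prop)
    (htrans : Transitive ord) (hirr : ∀ a, ¬ ord a a)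
    (htotal : ∀ a b, a = b ∨ ord a b ∨ ord b a)
    (hadd : ∀ a b c, ord a b → ord (a + c) (b + c))
    (hzero : ∀ a, a ≠ 0 → ord 0 a)
    (I : Ideal (MvPolynomial (Fin (r + 1)) k))
    (hgraded : ∀ f ∈ I, ∀ d : ℕ, homogeneousComponent d f ∈ I) :
    ∀ i : ℕ, gradedPieceDim k I i = gradedPieceDim k (InitialIdeal ord I) i := by
  classical
  intro i
  set V := homogeneousSubmodule (Fin (r + 1)) k i with hVdef
  -- the finite set of monomials of degree `i`
  have hTfin : {μ : Fin (r + 1) →₀ ℕ | Finsupp.degree μ = i}.Finite := by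
    rw [← Set.finite_coe_iff]
    refine Finite.of_injective (fun μ : {μ : Fin (r + 1) →₀ ℕ // Finsupp.degree μ = i} =>
      (fun j => (⟨μ.1 j, Nat.lt_succ_of_le (le_trans (Finsupp.le_degree j μ.1) (le_of_eq μ.2))⟩
        : Fin (i + 1)))) ?_
    intro μ ν h
    apply Subtype.ext; apply Finsupp.ext; intro j
    simpa using congrArg Fin.val (congrFun h j)
  set T := hTfin.toFinset with hTdef
  have hdegV : ∀ f ∈ V, ∀ ν ∈ (f : MvPolynomial (Fin (r + 1)) k).support,
      Finsupp.degree ν = i := by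
    intro f hf ν hν
    have h2 := ((mem_homogeneousSubmodule _ _).1 hf) (mem_support_iff.1 hν)
    rw [Finsupp.degree_eq_weight_one]
    exact h2
  have hsuppT : ∀ f ∈ V, (f : MvPolynomial (Fin (r + 1)) k).support ⊆ T := by
    intro f hf ν hν
    rw [hTdef, Set.Finite.mem_toFinset]
    exact hdegV f hf ν hν
  -- `V` is finite dimensional
  have hVfd : FiniteDimensional k V := by
    apply Submodule.finiteDimensional_of_le (S₂ := Submodule.span k
      ((T.image (fun μ => (monomial μ (1 : k) : MvPolynomial (Fin (r + 1)) k)) : Finset _) :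
        Set (MvPolynomial (Fin (r + 1)) k)))
    intro f hf
    rw [← support_sum_monomial_coeff f]
    refine Submodule.sum_mem _ fun μ hμ => ?_
    have hmono : (monomial μ (coeff μ f) : MvPolynomial (Fin (r + 1)) k)
        = (coeff μ f) • monomial μ (1 : k) := by
      simp [smul_monomial]
    rw [hmono]
    exact Submodule.smul_mem _ _ (Submodule.subset_span
      (Finset.mem_coe.2 (Finset.mem_image_of_mem _ (hsuppT f hf hμ))))
  -- dimension formula for the graded pieces
  have hquot : ∀ X : Ideal (MvPolynomial (Fin (r + 1)) k),
      gradedPieceDim k X i +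
        Module.finrank k ((Submodule.restrictScalars k X ⊓ V :
          Submodule k (MvPolynomial (Fin (r + 1)) k))) = Module.finrank k V := by
    intro X
    have h1 : Submodule.comap V.subtype (Submodule.restrictScalars k X)
        = Submodule.comap V.subtype (Submodule.restrictScalars k X ⊓ V) := by
      rw [Submodule.comap_inf, Submodule.comap_subtype_self, inf_top_eq]
    have h2 : Module.finrank k (Submodule.comap V.subtype (Submodule.restrictScalars k X))
        = Module.finrank k ((Submodule.restrictScalars k X ⊓ V :
            Submodule k (MvPolynomial (Fin (r + 1)) k))) := by
      rw [h1]
      exact LinearEquiv.finrank_eq (Submodule.comapSubtypeEquivOfLe inf_le_right)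
    have h3 := Submodule.finrank_quotient_add_finrank
      (Submodule.comap V.subtype (Submodule.restrictScalars k X))
    rw [h2] at h3
    exact h3
  -- the two sets of lead monomials agree
  set WI : Submodule k (MvPolynomial (Fin (r + 1)) k) := Submodule.restrictScalars k I ⊓ V
    with hWIdef
  set WJ : Submodule k (MvPolynomial (Fin (r + 1)) k) :=
    Submodule.restrictScalars k (InitialIdeal ord I) ⊓ V with hWJdef
  have hWIT : ∀ f ∈ WI, (f : MvPolynomial (Fin (r + 1)) k).support ⊆ T :=
    fun f hf => hsuppT f (Submodule.mem_inf.1 hf).2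
  have hWJT : ∀ f ∈ WJ, (f : MvPolynomial (Fin (r + 1)) k).support ⊆ T :=
    fun f hf => hsuppT f (Submodule.mem_inf.1 hf).2
  -- description of the generators of the initial ideal as an image
  set S : Set (Fin (r + 1) →₀ ℕ) := {μ | ∃ f ∈ I, f ≠ 0 ∧ IsLeadMonomial ord f μ} with hSdef
  have hgen : {q | ∃ f ∈ I, f ≠ 0 ∧ ∃ μ, IsLeadMonomial ord f μ ∧ q = monomial μ (1 : k)}
      = (fun μ => (monomial μ (1 : k) : MvPolynomial (Fin (r + 1)) k)) '' S := by
    ext q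
    constructor
    · rintro ⟨f, hf, hf0, μ, hμ, rfl⟩
      exact ⟨μ, ⟨f, hf, hf0, hμ⟩, rfl⟩
    · rintro ⟨μ, ⟨f, hf, hf0, hμ⟩, rfl⟩
      exact ⟨f, hf, hf0, μ, hμ, rfl⟩
  have hgen' : InitialIdeal ord I
      = Ideal.span ((fun μ => (monomial μ (1 : k) : MvPolynomial (Fin (r + 1)) k)) '' S) :=
    congrArg Ideal.span hgen
  have hsets : {μ | ∃ f ∈ WI, f ≠ 0 ∧ IsLeadMonomial ord f μ}
      = {μ | ∃ f ∈ WJ, f ≠ 0 ∧ IsLeadMonomial ord f μ} := by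
    ext μ
    constructor
    · rintro ⟨f, hfWI, hf0, hlead⟩
      obtain ⟨hfI, hfV⟩ := Submodule.mem_inf.1 hfWI
      have hμdeg : Finsupp.degree μ = i := hdegV f hfV μ hlead.1
      have hmJ : (monomial μ (1 : k) : MvPolynomial (Fin (r + 1)) k) ∈ InitialIdeal ord I :=
        Ideal.subset_span ⟨f, hfI, hf0, μ, hlead, rfl⟩
      have hmV : (monomial μ (1 : k) : MvPolynomial (Fin (r + 1)) k) ∈ V :=
        (mem_homogeneousSubmodule _ _).2 (isHomogeneous_monomial (1 : k) hμdeg)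
      have hm0 : (monomial μ (1 : k) : MvPolynomial (Fin (r + 1)) k) ≠ 0 := by
        rw [Ne, monomial_eq_zero]
        exact one_ne_zero
      refine ⟨monomial μ (1 : k), Submodule.mem_inf.2 ⟨hmJ, hmV⟩, hm0, ?_, ?_⟩
      · rw [mem_support_iff, coeff_monomial, if_pos rfl]
        exact one_ne_zero
      · intro μ' hμ' hne
        exfalso
        rw [support_monomial, if_neg (one_ne_zero (α := k))] at hμ'
        exact hne (Finset.mem_singleton.1 hμ')
    · rintro ⟨g, hgWJ, hg0, hlead⟩
      obtain ⟨hgJ, hgV⟩ := Submodule.mem_inf.1 hgWJ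
      have hμdeg : Finsupp.degree μ = i := hdegV g hgV μ hlead.1
      have hgJ' : g ∈ Ideal.span
          ((fun μ => (monomial μ (1 : k) : MvPolynomial (Fin (r + 1)) k)) '' S) := by
        rw [← hgen']
        exact hgJ
      obtain ⟨α, hαS, β, hμab⟩ := support_subset_of_mem_monomialSpan hgJ' μ hlead.1
      obtain ⟨f, hfI, hf0, hflead⟩ := hαS
      set h := homogeneousComponent (Finsupp.degree α) f with hhdef
      have hhI : h ∈ I := hgraded f hfI _
      have hcoeffα : coeff α h = coeff α f := by
        rw [hhdef, coeff_homogeneousComponent, if_pos rfl]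
      have hαf : coeff α f ≠ 0 := mem_support_iff.1 hflead.1
      have hαh : α ∈ h.support := mem_support_iff.2 (by rw [hcoeffα]; exact hαf)
      have hsupph : h.support ⊆ f.support := by
        intro ν hν
        rw [mem_support_iff] at hν ⊢
        intro hc
        apply hν
        rw [hhdef, coeff_homogeneousComponent]
        split <;> simp [hc]
      have hhlead : IsLeadMonomial ord h α :=
        ⟨hαh, fun ν hν hne => hflead.2 ν (hsupph hν) hne⟩
      set f' : MvPolynomial (Fin (r + 1)) k := monomial β 1 * h with hf'def
      have hf'I : f' ∈ I := Ideal.mul_mem_left _ _ hhI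
      have hcoeffμ : coeff μ f' = coeff α h := by
        rw [hμab, add_comm α β, hf'def, coeff_monomial_mul, one_mul]
      have hμf' : μ ∈ f'.support := mem_support_iff.2 (by
        rw [hcoeffμ, hcoeffα]; exact hαf)
      have hf'0 : f' ≠ 0 := fun hc => by
        rw [hc] at hμf'
        simp at hμf'
      have hf'lead : IsLeadMonomial ord f' μ := by
        refine ⟨hμf', fun ν hν hne => ?_⟩
        obtain ⟨p, hp, q, hq, hpq⟩ := Finset.mem_add.1 (support_mul _ _ hν)
        rw [support_monomial, if_neg (one_ne_zero (α := k))] at hp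
        rw [Finset.mem_singleton.1 hp] at hpq
        by_cases hqα : q = α
        · exfalso
          apply hne
          rw [← hpq, hqα, hμab]
          exact add_comm β α
        · have hqord : ord q α := hhlead.2 q hq hqα
          have := hadd q α β hqord
          rw [← hpq, add_comm β q, hμab]
          exact this
      -- f' is homogeneous of degree i
      have hdegadd : Finsupp.degree (α + β) = Finsupp.degree α + Finsupp.degree β := by
        simp [Finsupp.degree_eq_weight_one, map_add]
      have hf'hom : f'.IsHomogeneous (Finsupp.degree β + Finsupp.degree α) := by
        apply IsHomogeneous.mul
        · exact isHomogeneous_monomial (1 : k) rfl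
        · exact homogeneousComponent_isHomogeneous _ f
      have hdeg' : Finsupp.degree β + Finsupp.degree α = i := by
        rw [hμab, hdegadd] at hμdeg
        omega
      have hf'V : f' ∈ V := by
        rw [hVdef, mem_homogeneousSubmodule, ← hdeg']
        exact hf'hom
      exact ⟨f', Submodule.mem_inf.2 ⟨hf'I, hf'V⟩, hf'0, hf'lead⟩
  -- put everything together
  have hI := finrank_eq_ncard_lead htrans hirr htotal WI T hWIT
  have hJ := finrank_eq_ncard_lead htrans hirr htotal WJ T hWJT
  have hWIJ : Module.finrank k WI = Module.finrank k WJ := by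
    rw [hI, hJ, hsets]
  have h1 := hquot I
  have h2 := hquot (InitialIdeal ord I)
  rw [← hWIdef] at h1
  rw [← hWJdef] at h2
  rw [hWIJ] at h1
  omega
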